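/- Sign-coherence of index vectors for a rigid pair: let C be a Hom-finite 2-Calabi–Yau triangulated category with cluster-tilting subcategory T, and let X, Y be objects with Ext¹(X ⊕ Y, X ⊕ Y) = 0. Let T₁^X → T₀^X → X → T₁^X[1] and T₁^Y → T₀^Y → Y → T₁^Y[1] be triangles with minimal right T-approximations, with X, Y having no direct summands in T[1]. Then for every indecomposable T ∈ T: T is not simultaneously a direct summand of T₀^X and of T₁^Y. Consequently, for each indecomposable T, the coefficients [ind_T(X) : T] and [ind_T(Y) : T] of the indices ind_T(X) = [T₀^X] − [T₁^X] and ind_T(Y) = [T₀^Y] − [T₁^Y] cannot have strictly opposite signs. -/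

import Mathlib

open CategoryTheory CategoryTheory.Limits CategoryTheory.Pretriangulated

open Polynomial

/-- `P` is a direct summand of `Q`. -/
def IsDirectSummandOf {C : Type*} [Category C] (P Q : C) : Prop :=
  ∃ (i : P ⟶ Q) (r : Q ⟶ P), i ≫ r = 𝟙 P

/-- An object is indecomposable if it is nonzero and has no nontrivial idempotent
endomorphisms. -/
def IsIndecomposable {C : Type*} [Category C] [Preadditive C] (Z : C) : Prop :=
  ¬ CategoryTheory.Limits.IsZero Z ∧ ∀ e : Z ⟶ Z, e ≫ e = e → e = 0 ∨ e = 𝟙 Z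


/-- In a finite-dimensional algebra with only trivial idempotents, every element is
nilpotent or a unit. -/
lemma DK_nilpotent_or_unit {k A : Type*} [Field k] [Ring A] [Algebra k A]
    [FiniteDimensional k A] (hid : ∀ e : A, e * e = e → e = 0 ∨ e = 1) (a : A) :
    IsNilpotent a ∨ IsUnit a := by
  obtain ⟨p, hmon, hp⟩ := IsIntegral.of_finite k a
  obtain ⟨q, hq, hndvd⟩ := p.exists_eq_pow_rootMultiplicity_mul_and_not_dvd hmon.ne_zero 0
  simp only [map_zero, sub_zero] at hq hndvd
  set m := p.rootMultiplicity 0 with hm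
  have hc : q.coeff 0 ≠ 0 := fun h => hndvd (X_dvd_iff.mpr h)
  set c' : A := algebraMap k A (q.coeff 0) with hc'
  set c'' : A := algebraMap k A ((q.coeff 0)⁻¹) with hc''
  have hcc : c' * c'' = 1 := by
    rw [hc', hc'', ← map_mul, mul_inv_cancel₀ hc, map_one]
  set s : A := aeval a q.divX with hs
  -- `a` commutes with `s`
  have hcomm : a * s = s * a := by
    have h1 : a * s = aeval a (X * q.divX) := by rw [map_mul, aeval_X]
    have h2 : s * a = aeval a (q.divX * X) := by rw [map_mul, aeval_X]
    rw [h1, h2, mul_comm X]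
  -- the key relation `a ^ m * (c' + a * s) = 0`
  have h0 : a ^ m * c' + a ^ (m + 1) * s = 0 := by
    have h1 : (aeval a) p = 0 := by rwa [aeval_def]
    rw [hq] at h1
    rw [map_mul, map_pow, aeval_X] at h1
    have h2 : (aeval a) q = a * s + c' := by
      conv_lhs => rw [← X_mul_divX_add q]
      rw [map_add, map_mul, aeval_X, aeval_C, hs, hc']
    rw [h2, mul_add, ← mul_assoc, ← pow_succ] at h1
    rw [add_comm] at h1
    exact h1
  set t : A := -(s * c'') with ht
  have hat : Commute a t := by
    have h1 : a * c'' = c'' * a := (Algebra.commutes _ _).symm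
    show a * t = t * a
    rw [ht, mul_neg, neg_mul, ← mul_assoc, hcomm, mul_assoc, h1, ← mul_assoc]
  -- `a ^ m = a ^ (m + 1) * t`
  have hkey : a ^ m = a ^ (m + 1) * t := by
    have h1 : a ^ m * c' = -(a ^ (m + 1) * s) := by
      rw [eq_neg_iff_add_eq_zero]; exact h0
    calc a ^ m = a ^ m * (c' * c'') := by rw [hcc, mul_one]
      _ = (a ^ m * c') * c'' := by rw [mul_assoc]
      _ = -(a ^ (m + 1) * s) * c'' := by rw [h1]
      _ = a ^ (m + 1) * t := by rw [ht, mul_neg, neg_mul, mul_assoc]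
  -- iterate: `a ^ m = a ^ (m + n) * t ^ n`
  have hkey2 : ∀ n : ℕ, a ^ m = a ^ (m + n) * t ^ n := by
    intro n
    induction n with
    | zero => simp
    | succ n ih =>
      have step : a ^ (m + n) = a ^ (m + n + 1) * t := by
        calc a ^ (m + n) = a ^ n * a ^ m := by rw [← pow_add, Nat.add_comm]
          _ = a ^ n * (a ^ (m + 1) * t) := by rw [hkey]
          _ = (a ^ n * a ^ (m + 1)) * t := by rw [mul_assoc]
          _ = a ^ (m + n + 1) * t := by rw [← pow_add]; ring_nf
      calc a ^ m = a ^ (m + n) * t ^ n := ih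
        _ = (a ^ (m + n + 1) * t) * t ^ n := by rw [step]
        _ = a ^ (m + (n + 1)) * t ^ (n + 1) := by
            rw [mul_assoc, ← pow_succ', ← Nat.add_assoc]
  rcases Nat.eq_zero_or_pos m with hm0 | hmpos
  · -- `a` is a unit
    right
    have h1 : a * t = 1 := by
      have := hkey
      rw [hm0, pow_zero, zero_add, pow_one] at this
      exact this.symm
    have h2 : t * a = 1 := by rw [← hat.eq]; exact h1
    exact ⟨⟨a, t, h1, h2⟩, rfl⟩
  · set e : A := a ^ m * t ^ m with he
    have hee : e * e = e := by
      have h1 : t ^ m * a ^ m = a ^ m * t ^ m := (hat.symm.pow_pow m m).eq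
      calc e * e = a ^ m * (t ^ m * (a ^ m * t ^ m)) := by rw [he, mul_assoc]
        _ = a ^ m * (t ^ m * a ^ m * t ^ m) := by rw [mul_assoc]
        _ = a ^ m * (a ^ m * t ^ m * t ^ m) := by rw [h1]
        _ = a ^ (m + m) * t ^ m * t ^ m := by
              rw [pow_add]; simp only [mul_assoc]
        _ = a ^ m * t ^ m := by rw [← hkey2 m]
        _ = e := he.symm
    rcases hid e hee with he0 | he1
    · left
      refine ⟨m, ?_⟩
      calc a ^ m = a ^ (m + m) * t ^ m := hkey2 m
        _ = a ^ m * (a ^ m * t ^ m) := by rw [pow_add, mul_assoc]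
        _ = a ^ m * e := by rw [← he]
        _ = 0 := by rw [he0, mul_zero]
    · right
      have h1 : a * (a ^ (m - 1) * t ^ m) = 1 := by
        rw [← mul_assoc, ← pow_succ', Nat.sub_add_cancel hmpos, ← he, he1]
      have h2 : (a ^ (m - 1) * t ^ m) * a = 1 := by
        have hco : Commute a (a ^ (m - 1) * t ^ m) :=
          ((Commute.refl a).pow_right _).mul_right (hat.pow_right m)
        rw [← hco.eq]; exact h1
      exact ⟨⟨a, _, h1, h2⟩, rfl⟩

lemma DK_unit_of_sum {k A : Type*} [Field k] [Ring A] [Algebra k A]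
    [FiniteDimensional k A] (hid : ∀ e : A, e * e = e → e = 0 ∨ e = 1) (α β : A)
    (h : α + β = 1) : IsUnit α ∨ IsUnit β := by
  rcases DK_nilpotent_or_unit (k := k) hid α with hn | hu
  · right
    have : β = 1 - α := by rw [← h, add_sub_cancel_left]
    rw [this]
    exact hn.isUnit_one_sub
  · left; exact hu

/-- If `T` is a direct summand of `M` whose inclusion is killed by a right-minimal
morphism `f : M ⟶ N`, then `T` is zero. -/
lemma DK_cancel_aux {C : Type*} [Category C] [Preadditive C] {T M N : C} (f : M ⟶ N)
    (hmin : ∀ φ : M ⟶ M, φ ≫ f = f → IsIso φ)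
    (ι : T ⟶ M) (ρ : M ⟶ T) (h1 : ι ≫ ρ = 𝟙 T) (h2 : ι ≫ f = 0) : 𝟙 T = (0 : T ⟶ T) := by
  have hφ : (𝟙 M - ρ ≫ ι) ≫ f = f := by
    rw [Preadditive.sub_comp, Category.id_comp, Category.assoc, h2, Limits.comp_zero, sub_zero]
  haveI := hmin _ hφ
  have hι : ι ≫ (𝟙 M - ρ ≫ ι) = 0 := by
    rw [Preadditive.comp_sub, Category.comp_id, ← Category.assoc, h1, Category.id_comp, sub_self]
  have hι0 : ι = 0 := by
    rw [← Category.comp_id ι, ← IsIso.hom_inv_id (𝟙 M - ρ ≫ ι), ← Category.assoc, hι,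
      Limits.zero_comp]
  rw [← h1, hι0, Limits.zero_comp]

/-- The key step of Dehy–Keller sign-coherence: if `Ext¹(Y, X) = 0` and `T` is a
nonzero indecomposable common direct summand of `T₀X` and `T₁Y`, we get a
contradiction. -/
lemma DK_key (k : Type*) [Field k] {C : Type*} [Category C] [Preadditive C]
    [HasZeroObject C] [HasShift C ℤ] [∀ n : ℤ, (shiftFunctor C n).Additive]
    [Pretriangulated C] [CategoryTheory.Linear k C]
    [∀ A B : C, FiniteDimensional k (A ⟶ B)]
    {X Y T₁X T₀X T₁Y T₀Y : C}
    (hYX : ∀ f : Y ⟶ X⟦(1 : ℤ)⟧, f = 0)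
    {aX : T₁X ⟶ T₀X} {fX : T₀X ⟶ X} {cX : X ⟶ T₁X⟦(1 : ℤ)⟧}
    (hXtri : Triangle.mk aX fX cX ∈ distTriang C)
    {aY : T₁Y ⟶ T₀Y} {fY : T₀Y ⟶ Y} {cY : Y ⟶ T₁Y⟦(1 : ℤ)⟧}
    (hYtri : Triangle.mk aY fY cY ∈ distTriang C)
    (happrox : ∀ g : T₀Y ⟶ X, ∃ h : T₀Y ⟶ T₀X, h ≫ fX = g)
    (hminX : ∀ φ : T₀X ⟶ T₀X, φ ≫ fX = fX → IsIso φ)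
    (hminY : ∀ φ : T₀Y ⟶ T₀Y, φ ≫ fY = fY → IsIso φ)
    (T : C) (hTind : IsIndecomposable T)
    (hi : IsDirectSummandOf T T₀X) (hj : IsDirectSummandOf T T₁Y) : False := by
  obtain ⟨hTne, hTid⟩ := hTind
  obtain ⟨i, p, hip⟩ := hi
  obtain ⟨j, q, hjq⟩ := hj
  -- every morphism `Y⟦-1⟧ ⟶ X` vanishes
  have hm1 : ∀ f : (Y⟦(-1 : ℤ)⟧ ⟶ X), f = 0 := by
    intro f
    set σ : ((Y⟦(-1 : ℤ)⟧)⟦(1 : ℤ)⟧ : C) ≅ Y :=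
      (shiftFunctorCompIsoId C (-1 : ℤ) (1 : ℤ) (by norm_num)).app Y with hσ
    have h1 : σ.inv ≫ (shiftFunctor C (1 : ℤ)).map f = 0 := hYX _
    have h2 : (shiftFunctor C (1 : ℤ)).map f = 0 := by
      rw [← Category.id_comp ((shiftFunctor C (1 : ℤ)).map f), ← σ.hom_inv_id,
        Category.assoc, h1, Limits.comp_zero]
    apply (shiftFunctor C (1 : ℤ)).map_injective
    rw [h2, Functor.map_zero]
  -- Step 1: `q ≫ i ≫ fX` factors through `aY`
  obtain ⟨h, hh⟩ := Triangle.yoneda_exact₂ _ (inv_rot_of_distTriang _ hYtri)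
    (q ≫ i ≫ fX) (hm1 _)
  have hh : q ≫ i ≫ fX = aY ≫ h := hh
  -- Step 2: factor `h` through the approximation `fX`
  obtain ⟨h', hh'⟩ := happrox h
  -- Step 3: `q ≫ i - aY ≫ h'` kills `fX`, so it factors through `aX`
  have h3 : (q ≫ i - aY ≫ h') ≫ fX = 0 := by
    rw [Preadditive.sub_comp, Category.assoc, Category.assoc, hh', ← hh, sub_self]
  obtain ⟨(n : T₁Y ⟶ T₁X), hn⟩ := Triangle.coyoneda_exact₂ _ hXtri (q ≫ i - aY ≫ h') h3
  have hn : q ≫ i - aY ≫ h' = n ≫ aX := hn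
  -- decompose the identity of `T`
  set α : T ⟶ T := j ≫ aY ≫ h' ≫ p with hα
  set β : T ⟶ T := j ≫ n ≫ aX ≫ p with hβ
  have hsum : α + β = 𝟙 T := by
    have hqi : aY ≫ h' + n ≫ aX = q ≫ i := by
      rw [← hn]; abel
    calc α + β = j ≫ (aY ≫ h' + n ≫ aX) ≫ p := by
          rw [hα, hβ, Preadditive.add_comp, Preadditive.comp_add]
          simp only [Category.assoc]
      _ = j ≫ (q ≫ i) ≫ p := by rw [hqi]
      _ = 𝟙 T := by
          simp only [Category.assoc]; rw [hip, Category.comp_id, hjq]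
  -- `End T` is a finite-dimensional algebra with only trivial idempotents
  haveI : FiniteDimensional k (End T) := inferInstanceAs (FiniteDimensional k (T ⟶ T))
  have hid : ∀ e : End T, e * e = e → e = 0 ∨ e = 1 := fun e he => hTid e he
  have hsum' : α + β = (1 : End T) := hsum
  have hzero : 𝟙 T = (0 : T ⟶ T) := by
    rcases DK_unit_of_sum (k := k) hid α β hsum' with hu | hu
    · -- `α` invertible: contradiction with minimality of `fY`
      obtain ⟨u, hu⟩ := hu
      have h1 : α ≫ (↑u⁻¹ : End T) = 𝟙 T := by
        rw [← hu, ← End.mul_def, ← End.one_def]; exact u.inv_mul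
      refine DK_cancel_aux fY hminY (j ≫ aY) (h' ≫ p ≫ (↑u⁻¹ : End T)) ?_ ?_
      · rw [← h1, hα]; simp only [Category.assoc]
      · have h2 : aY ≫ fY = 0 := comp_distTriang_mor_zero₁₂ _ hYtri
        rw [Category.assoc, h2, Limits.comp_zero]
    · -- `β` invertible: contradiction with minimality of `fX`
      obtain ⟨u, hu⟩ := hu
      have h1 : β ≫ (↑u⁻¹ : End T) = 𝟙 T := by
        rw [← hu, ← End.mul_def, ← End.one_def]; exact u.inv_mul
      refine DK_cancel_aux fX hminX ((j ≫ n) ≫ aX) (p ≫ (↑u⁻¹ : End T)) ?_ ?_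
      · rw [← h1, hβ]; simp only [Category.assoc]
      · have h2 : aX ≫ fX = 0 := comp_distTriang_mor_zero₁₂ _ hXtri
        rw [Category.assoc, h2, Limits.comp_zero]
  exact hTne ((IsZero.iff_id_eq_zero T).mpr hzero)

/-- Sign-coherence of index vectors for a rigid pair (Dehy–Keller): in a Hom-finite
2-Calabi–Yau triangulated category `C` with cluster-tilting subcategory `𝒯`, if
`X ⊕ Y` is rigid, `T₁ᵡ → T₀ᵡ → X → T₁ᵡ[1]` and `T₁ʸ → T₀ʸ → Y → T₁ʸ[1]` are
triangles whose middle maps are minimal right `𝒯`-approximations, and `X, Y` have no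
direct summands in `𝒯[1]`, then no indecomposable `T ∈ 𝒯` is simultaneously a direct
summand of `T₀ᵡ` and of `T₁ʸ`, nor of `T₀ʸ` and of `T₁ᵡ`; hence the coefficients
`[ind(X) : T]` and `[ind(Y) : T]` never have strictly opposite signs. -/
theorem index_sign_coherence_of_rigid_pair
    (k : Type*) [Field k] {C : Type*} [Category C] [Preadditive C] [HasZeroObject C]
    [HasShift C ℤ] [∀ n : ℤ, (shiftFunctor C n).Additive] [Pretriangulated C]
    [HasBinaryBiproducts C] [CategoryTheory.Linear k C]
    [∀ A B : C, FiniteDimensional k (A ⟶ B)]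
    -- 2-Calabi–Yau property
    (hCY : ∀ A B : C, (A ⟶ B⟦(2 : ℤ)⟧) ≃ₗ[k] Module.Dual k (B ⟶ A))
    -- `𝒯` is a cluster-tilting subcategory
    (𝒯 : Set C)
    (hT1 : ∀ Z : C, (∀ T' ∈ 𝒯, ∀ f : Z ⟶ T'⟦(1 : ℤ)⟧, f = 0) ↔ Z ∈ 𝒯)
    (hT2 : ∀ Z : C, (∀ T' ∈ 𝒯, ∀ f : T' ⟶ Z⟦(1 : ℤ)⟧, f = 0) ↔ Z ∈ 𝒯)
    -- the rigid pair
    (X Y : C) (hrigid : ∀ f : (X ⊞ Y) ⟶ (X ⊞ Y)⟦(1 : ℤ)⟧, f = 0)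
    -- minimal `𝒯`-presentation triangles of `X` and `Y`
    (T₁X T₀X T₁Y T₀Y : C) (hmem : T₁X ∈ 𝒯 ∧ T₀X ∈ 𝒯 ∧ T₁Y ∈ 𝒯 ∧ T₀Y ∈ 𝒯)
    (aX : T₁X ⟶ T₀X) (fX : T₀X ⟶ X) (cX : X ⟶ T₁X⟦(1 : ℤ)⟧)
    (hXtri : Triangle.mk aX fX cX ∈ distTriang C)
    (aY : T₁Y ⟶ T₀Y) (fY : T₀Y ⟶ Y) (cY : Y ⟶ T₁Y⟦(1 : ℤ)⟧)
    (hYtri : Triangle.mk aY fY cY ∈ distTriang C)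
    (happroxX : ∀ T' ∈ 𝒯, ∀ g : T' ⟶ X, ∃ h : T' ⟶ T₀X, h ≫ fX = g)
    (hminX : ∀ φ : T₀X ⟶ T₀X, φ ≫ fX = fX → IsIso φ)
    (happroxY : ∀ T' ∈ 𝒯, ∀ g : T' ⟶ Y, ∃ h : T' ⟶ T₀Y, h ≫ fY = g)
    (hminY : ∀ φ : T₀Y ⟶ T₀Y, φ ≫ fY = fY → IsIso φ)
    -- `X` and `Y` have no direct summands in `𝒯[1]`
    (hXsum : ∀ T' ∈ 𝒯, ¬ IsZero T' → ¬ IsDirectSummandOf (T'⟦(1 : ℤ)⟧) X)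
    (hYsum : ∀ T' ∈ 𝒯, ¬ IsZero T' → ¬ IsDirectSummandOf (T'⟦(1 : ℤ)⟧) Y) :
    ∀ T' ∈ 𝒯, IsIndecomposable T' →
      ¬ (IsDirectSummandOf T' T₀X ∧ IsDirectSummandOf T' T₁Y) ∧
      ¬ (IsDirectSummandOf T' T₀Y ∧ IsDirectSummandOf T' T₁X) := by
    -- rigidity gives the two `Ext¹` vanishings
  have hYX : ∀ f : Y ⟶ X⟦(1 : ℤ)⟧, f = 0 := by
    intro f
    have h := hrigid ((biprod.snd : X ⊞ Y ⟶ Y) ≫ f ≫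
      (shiftFunctor C (1 : ℤ)).map (biprod.inl : X ⟶ X ⊞ Y))
    have h2 : f = (biprod.inr : Y ⟶ X ⊞ Y) ≫ ((biprod.snd : X ⊞ Y ⟶ Y) ≫ f ≫
        (shiftFunctor C (1 : ℤ)).map (biprod.inl : X ⟶ X ⊞ Y)) ≫
        (shiftFunctor C (1 : ℤ)).map (biprod.fst : X ⊞ Y ⟶ X) := by
      simp [← Functor.map_comp]
    rw [h2, h, Limits.zero_comp, Limits.comp_zero]
  have hXY : ∀ f : X ⟶ Y⟦(1 : ℤ)⟧, f = 0 := by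
    intro f
    have h := hrigid ((biprod.fst : X ⊞ Y ⟶ X) ≫ f ≫
      (shiftFunctor C (1 : ℤ)).map (biprod.inr : Y ⟶ X ⊞ Y))
    have h2 : f = (biprod.inl : X ⟶ X ⊞ Y) ≫ ((biprod.fst : X ⊞ Y ⟶ X) ≫ f ≫
        (shiftFunctor C (1 : ℤ)).map (biprod.inr : Y ⟶ X ⊞ Y)) ≫
        (shiftFunctor C (1 : ℤ)).map (biprod.snd : X ⊞ Y ⟶ Y) := by
      simp [← Functor.map_comp]
    rw [h2, h, Limits.zero_comp, Limits.comp_zero]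
  intro T' hT' hind
  constructor
  · rintro ⟨h1, h2⟩
    exact DK_key k hYX hXtri hYtri (happroxX T₀Y hmem.2.2.2) hminX hminY T' hind h1 h2
  · rintro ⟨h1, h2⟩
    exact DK_key k hXY hYtri hXtri (happroxY T₀X hmem.2.1) hminY hminX T' hind h1 h2
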